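/- For every countable ordinal α, the space ⟨A_α, τ_α⟩ is a Baire space: the intersection of countably many dense open subsets of A_α in the topology τ_α is dense. In fact, each nonempty basic τ_α-open set U(n,T) is not τ_α-meager. -/

import Mathlib

open Set

/-- A subtree of `ω^{<ω}`: a set of finite sequences of naturals closed under
initial segments (prefixes). -/
def IsTree (T : Set (List ℕ)) : Prop := ∀ s ∈ T, ∀ t : List ℕ, t <+: s → t ∈ T

/-- `T` has an infinite branch. -/
def HasInfiniteBranch (T : Set (List ℕ)) : Prop :=
  ∃ x : ℕ → ℕ, ∀ n : ℕ, (List.range n).map x ∈ T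

/-- A well-founded tree: a subtree of `ω^{<ω}` with no infinite branch. -/
def IsWFTree (T : Set (List ℕ)) : Prop := IsTree T ∧ ¬ HasInfiniteBranch T

/-- The child relation of `T`: `childRel T s t` iff `s = t⌢⟨m⟩ ∈ T` for some `m`. -/
def childRel (T : Set (List ℕ)) (s t : List ℕ) : Prop := s ∈ T ∧ ∃ m : ℕ, s = t ++ [m]

/-- The canonical rank function of a well-founded tree:
`h_T ν = sup { h_T (ν⌢⟨m⟩) + 1 : ν⌢⟨m⟩ ∈ T }`. -/
noncomputable def treeRank (T : Set (List ℕ)) (ν : List ℕ) : Ordinal :=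
  @dite _ (WellFounded (childRel T)) (Classical.dec _) (fun h => (h.apply ν).rank) (fun _ => 0)

/-- `A_α`: the well-founded trees containing `⟨⟩` whose canonical rank at `⟨⟩` is `α`. -/
def Atree (α : Ordinal) : Set (Set (List ℕ)) :=
  {T | IsWFTree T ∧ [] ∈ T ∧ treeRank T [] = α}

/-- `n^{≤ n}`: the finite sequences of length at most `n` with all entries `< n`. -/
def seqBelow (n : ℕ) : Set (List ℕ) := {l | l.length ≤ n ∧ ∀ x ∈ l, x < n}

/-- The basic τ_α-open set `U(n,T)` determined by `n ∈ ℕ` and `T ∈ A_α`. -/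
def Unbhd (α : Ordinal) (n : ℕ) (T : ↥(Atree α)) : Set (↥(Atree α)) :=
  {T' | T'.1 ∩ seqBelow n = T.1 ∩ seqBelow n ∧
    ∀ ν ∈ T.1 ∩ seqBelow n, treeRank T'.1 ν = treeRank T.1 ν}

/-- The topology `τ_α` on `A_α`, generated by the sets `U(n,T)`. -/
def tauTop (α : Ordinal) : TopologicalSpace ↥(Atree α) :=
  TopologicalSpace.generateFrom {s | ∃ (n : ℕ) (T : ↥(Atree α)), s = Unbhd α n T}


/-! ### Auxiliary development -/

section AuxTree

open List

lemma isTree_of_step {T : Set (List ℕ)} (h : ∀ s m, s ++ [m] ∈ T → s ∈ T) :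
    IsTree T := by
  intro s
  induction s using List.reverseRecOn with
  | nil =>
    intro hs t ht
    rwa [List.prefix_nil.mp ht]
  | append_singleton l m ih =>
    intro hs t ht
    rcases le_or_gt t.length l.length with hle | hlt
    · exact ih (h _ _ hs) t ((List.isPrefix_append_of_length hle).mp ht)
    · have hlen : t.length = (l ++ [m]).length := le_antisymm ht.length_le (by simpa using hlt)
      rwa [ht.eq_of_length hlen]

lemma childRel_wf {T : Set (List ℕ)} (hT : IsWFTree T) : WellFounded (childRel T) := by
  by_contra hwf
  obtain ⟨a, ha⟩ : ∃ a, ¬ Acc (childRel T) a := by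
    by_contra h; push_neg at h; exact hwf ⟨h⟩
  apply hT.2
  have step : ∀ s, ¬ Acc (childRel T) s → ∃ c, childRel T c s ∧ ¬ Acc (childRel T) c := by
    intro s hs
    by_contra hc; push_neg at hc
    exact hs (Acc.intro s fun y hy => hc y hy)
  choose! f hf1 hf2 using step
  set g : ℕ → List ℕ := fun n => f^[n] a with hg
  have hacc : ∀ n, ¬ Acc (childRel T) (g n) := by
    intro n; induction n with
    | zero => exact ha
    | succ k ih =>
      rw [show g (k+1) = f (g k) from Function.iterate_succ_apply' f k a]
      exact hf2 _ ih
  have hrel : ∀ n, childRel T (g (n+1)) (g n) := by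
    intro n
    rw [show g (n+1) = f (g n) from Function.iterate_succ_apply' f n a]
    exact hf1 _ (hacc n)
  have hmem : ∀ n, g n ∈ T := by
    intro n
    cases n with
    | zero =>
      obtain ⟨m, hm⟩ := (hrel 0).2
      exact hT.1 _ (hrel 0).1 (g 0) (hm ▸ List.prefix_append _ _)
    | succ k => exact (hrel k).1
  have hlen : ∀ n, (g n).length = (g 0).length + n := by
    intro n; induction n with
    | zero => rfl
    | succ k ih =>
      obtain ⟨m, hm⟩ := (hrel k).2
      rw [hm, List.length_append, ih]
      simp [Nat.add_assoc]
  set xf : ℕ → ℕ := fun n => (g (n+1)).getD n 0 with hxf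
  have key : ∀ n, (List.range n).map xf <+: g n := by
    intro n; induction n with
    | zero => simp
    | succ k ih =>
      have hgk : g k <+: g (k+1) := by
        obtain ⟨m, hm⟩ := (hrel k).2
        rw [hm]; exact List.prefix_append _ _
      have h1 : (List.range k).map xf <+: g (k+1) := ih.trans hgk
      have hlt : ((List.range k).map xf).length < (g (k+1)).length := by
        rw [List.length_map, List.length_range]
        have := hlen (k+1); omega
      have h2 := List.concat_get_prefix h1 hlt
      rw [List.range_succ, List.map_append]
      have hx : [xf k] = [(g (k+1)).get ⟨((List.range k).map xf).length, hlt⟩] := by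
        have hk : ((List.range k).map xf).length = k := by simp
        simp only [List.get_eq_getElem, hxf]
        congr 1
        rw [List.getD_eq_getElem]
        · congr 1; exact hk.symm
        · have := hlen (k+1); omega
      rw [List.map_singleton, hx]
      exact h2
  exact ⟨xf, fun n => hT.1 _ (hmem n) _ (key n)⟩

end AuxTree


section Rank

lemma treeRank_eq {T : Set (List ℕ)} (h : WellFounded (childRel T)) (ν : List ℕ) :
    treeRank T ν = (h.apply ν).rank := dif_pos h

lemma treeRank_lt {T : Set (List ℕ)} (h : WellFounded (childRel T)) {c ν : List ℕ}
    (hc : childRel T c ν) : treeRank T c < treeRank T ν := by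
  rw [treeRank_eq h, treeRank_eq h]
  exact (h.apply ν).rank_lt_of_rel hc

lemma treeRank_eq_iSup {T : Set (List ℕ)} (h : WellFounded (childRel T)) (ν : List ℕ) :
    treeRank T ν = ⨆ b : {b // childRel T b ν}, Order.succ (treeRank T b.1) := by
  rw [treeRank_eq h, (h.apply ν).rank_eq]
  exact iSup_congr fun b => congrArg _ (treeRank_eq h b.1).symm

lemma rank_unique {r : List ℕ → List ℕ → Prop} (h : WellFounded r) (v : List ℕ → Ordinal)
    (hv : ∀ a, v a = ⨆ b : {b // r b a}, Order.succ (v b.1)) (a : List ℕ) : v a = (h.apply a).rank := by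
  induction a using h.induction with
  | _ a ih =>
    rw [hv a, (h.apply a).rank_eq]
    exact iSup_congr fun b => congrArg _ (ih b.1 b.2)

lemma exists_witness {T : Set (List ℕ)} (h : WellFounded (childRel T)) {ν : List ℕ}
    {β : Ordinal} (hβ : β < treeRank T ν) : ∃ c, childRel T c ν ∧ β ≤ treeRank T c := by
  rw [treeRank_eq_iSup h, Ordinal.lt_iSup_iff] at hβ
  obtain ⟨b, hb⟩ := hβ
  exact ⟨b.1, b.2, Order.lt_succ_iff.mp hb⟩

lemma treeRank_le_root {T : Set (List ℕ)} (hT : IsTree T) (h : WellFounded (childRel T)) :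
    ∀ ν ∈ T, treeRank T ν ≤ treeRank T [] := by
  intro ν
  induction ν using List.reverseRecOn with
  | nil => intro _; exact le_rfl
  | append_singleton l m ih =>
    intro hν
    have hl : l ∈ T := hT _ hν l (List.prefix_append _ _)
    exact le_of_lt (lt_of_lt_of_le (treeRank_lt h ⟨hν, m, rfl⟩) (ih hl))

variable {α : Ordinal}

/-- The value function associated to a partial assignment of ordinals to sequences. -/
noncomputable def vOf (F : List ℕ → Option ↥(Set.Iic α)) (ν : List ℕ) : Ordinal :=
  (F ν).elim 0 Subtype.val

lemma master {F : List ℕ → Option ↥(Set.Iic α)}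
    (h2 : ∀ s m, F (s ++ [m]) ≠ none → F s ≠ none)
    (h3 : ∀ s m β γ, F (s ++ [m]) = some β → F s = some γ → (β : Ordinal) < γ)
    (h4 : ∀ s γ, F s = some γ → ∀ β : Ordinal, β < γ →
      ∃ m δ, F (s ++ [m]) = some δ ∧ β ≤ (δ : Ordinal)) :
    IsTree {ν | F ν ≠ none} ∧ WellFounded (childRel {ν | F ν ≠ none}) ∧
      ¬ HasInfiniteBranch {ν | F ν ≠ none} ∧
      ∀ ν, treeRank {ν | F ν ≠ none} ν = vOf F ν := by
  set T : Set (List ℕ) := {ν | F ν ≠ none} with hTdef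
  have htree : IsTree T := isTree_of_step fun s m hs => h2 s m hs
  have vlt : ∀ {c ν}, childRel T c ν → vOf F c < vOf F ν := by
    rintro c ν ⟨hc, m, rfl⟩
    obtain ⟨β, hβ⟩ := Option.ne_none_iff_exists'.mp hc
    obtain ⟨γ, hγ⟩ := Option.ne_none_iff_exists'.mp (h2 _ _ hc)
    have := h3 _ _ _ _ hβ hγ
    simpa [vOf, hβ, hγ] using this
  have hwf : WellFounded (childRel T) :=
    Subrelation.wf (fun hc => vlt hc) (InvImage.wf (vOf F) Ordinal.lt_wf)
  have hnb : ¬ HasInfiniteBranch T := by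
    rintro ⟨x, hx⟩
    obtain ⟨mn, hmn, hmin⟩ := hwf.has_min (Set.range fun n => (List.range n).map x)
      ⟨_, ⟨0, rfl⟩⟩
    obtain ⟨n, rfl⟩ := hmn
    refine hmin ((List.range (n+1)).map x) ⟨n+1, rfl⟩ ⟨hx (n+1), x n, ?_⟩
    rw [List.range_succ, List.map_append]
    rfl
  have hv : ∀ a, vOf F a = ⨆ b : {b // childRel T b a}, Order.succ (vOf F b.1) := by
    intro a
    rcases hFa : F a with _ | γ
    · haveI : IsEmpty {b // childRel T b a} := by
        constructor
        rintro ⟨b, hb, m, rfl⟩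
        exact (h2 _ _ hb) hFa
      rw [ciSup_of_empty]
      simp [vOf, hFa, Ordinal.bot_eq_zero]
    · have hva : vOf F a = (γ : Ordinal) := by simp [vOf, hFa]
      rw [hva]
      apply le_antisymm
      · apply le_of_forall_lt
        intro β hβ
        obtain ⟨m, δ, hδ, hβδ⟩ := h4 a γ hFa β hβ
        have hmem : a ++ [m] ∈ T := by simp [hTdef, hδ]
        have hb : childRel T (a ++ [m]) a := ⟨hmem, m, rfl⟩
        calc β ≤ (δ : Ordinal) := hβδ
          _ < Order.succ (vOf F (a ++ [m])) := by
              simp only [vOf, hδ, Option.elim]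
              exact Order.lt_succ _
          _ ≤ _ := Ordinal.le_iSup (fun b : {b // childRel T b a} => Order.succ (vOf F b.1)) ⟨_, hb⟩
      · rw [Ordinal.iSup_le_iff]
        rintro ⟨b, hb, m, rfl⟩
        obtain ⟨δ, hδ⟩ := Option.ne_none_iff_exists'.mp hb
        have := h3 _ _ _ _ hδ hFa
        simp only [vOf, hδ, Option.elim]
        exact Order.succ_le_iff.mpr this
  have hrank : ∀ ν, treeRank T ν = vOf F ν := by
    intro ν
    rw [treeRank_eq hwf, (rank_unique hwf (vOf F) hv ν).symm]
  exact ⟨htree, hwf, hnb, hrank⟩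

end Rank


section Coding

variable {α : Ordinal}

lemma childRel_wf_mem (T : ↥(Atree α)) : WellFounded (childRel T.1) := childRel_wf T.2.1

lemma rank_le_alpha (T : ↥(Atree α)) {ν : List ℕ} (hν : ν ∈ T.1) : treeRank T.1 ν ≤ α := by
  have h := treeRank_le_root T.2.1.1 (childRel_wf_mem T) ν hν
  rwa [T.2.2.2] at h

-- The (optional ordinal)-valued code of a tree in `A_α`.
open Classical in
noncomputable def codeF (T : ↥(Atree α)) (ν : List ℕ) : Option ↥(Set.Iic α) :=
  if h : ν ∈ T.1 then some ⟨treeRank T.1 ν, rank_le_alpha T h⟩ else none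

lemma codeF_pos {T : ↥(Atree α)} {ν : List ℕ} (h : ν ∈ T.1) :
    codeF T ν = some ⟨treeRank T.1 ν, rank_le_alpha T h⟩ := dif_pos h

lemma codeF_neg {T : ↥(Atree α)} {ν : List ℕ} (h : ν ∉ T.1) : codeF T ν = none := dif_neg h

lemma treeRank_of_not_mem (T : ↥(Atree α)) {ν : List ℕ} (h : ν ∉ T.1) :
    treeRank T.1 ν = 0 := by
  have : IsEmpty {b // childRel T.1 b ν} := by
    constructor
    rintro ⟨b, hb, m, rfl⟩
    exact h (T.2.1.1 _ hb ν (List.prefix_append _ _))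
  rw [treeRank_eq_iSup (childRel_wf_mem T), ciSup_of_empty]
  exact Ordinal.bot_eq_zero

lemma codeF_ne_none_iff {T : ↥(Atree α)} {ν : List ℕ} : codeF T ν ≠ none ↔ ν ∈ T.1 := by
  by_cases h : ν ∈ T.1
  · simp [codeF_pos h, h]
  · simp [codeF_neg h, h]

lemma codeF_eq_some_iff {T : ↥(Atree α)} {ν : List ℕ} {γ : ↥(Set.Iic α)} :
    codeF T ν = some γ ↔ ν ∈ T.1 ∧ treeRank T.1 ν = (γ : Ordinal) := by
  by_cases h : ν ∈ T.1
  · rw [codeF_pos h]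
    simp only [Option.some.injEq]
    constructor
    · rintro rfl; exact ⟨h, rfl⟩
    · rintro ⟨-, hr⟩; exact Subtype.ext hr
  · simp [codeF_neg h, h]

lemma vOf_codeF (T : ↥(Atree α)) (ν : List ℕ) : vOf (codeF T) ν = treeRank T.1 ν := by
  by_cases h : ν ∈ T.1
  · rw [vOf, codeF_pos h]; rfl
  · rw [vOf, codeF_neg h, treeRank_of_not_mem T h]; rfl

/-- membership of a node in `seqBelow` for a large enough bound -/
lemma seqBelow_mono {n n' : ℕ} (h : n ≤ n') : seqBelow n ⊆ seqBelow n' := by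
  rintro l ⟨h1, h2⟩
  exact ⟨h1.trans h, fun x hx => lt_of_lt_of_le (h2 x hx) h⟩

lemma mem_seqBelow (s : List ℕ) (j k : ℕ) (hj : j ≤ k) :
    s ++ [j] ∈ seqBelow (s.length + s.sum + k + 2) := by
  constructor
  · simp; omega
  · intro x hx
    rcases List.mem_append.mp hx with hx | hx
    · have := List.single_le_sum (fun y (_ : y ∈ s) => Nat.zero_le y) x hx
      omega
    · simp at hx; omega

lemma mem_seqBelow' (s : List ℕ) (k : ℕ) : s ∈ seqBelow (s.length + s.sum + k + 2) := by
  constructor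
  · omega
  · intro x hx
    have := List.single_le_sum (fun y (_ : y ∈ s) => Nat.zero_le y) x hx
    omega

lemma seqBelow_finite (n : ℕ) : (seqBelow n).Finite := by
  have h : seqBelow n ⊆ (fun l : List (Fin n) => l.map Fin.val) '' {l | l.length ≤ n} := by
    rintro l ⟨h1, h2⟩
    refine ⟨l.pmap (fun x hx => (⟨x, hx⟩ : Fin n)) h2, by simpa using h1, ?_⟩
    simp [List.map_pmap]
  exact ((List.finite_length_le (Fin n) n).image _).subset h

lemma mem_Unbhd_self (n : ℕ) (T : ↥(Atree α)) : T ∈ Unbhd α n T := ⟨rfl, fun _ _ => rfl⟩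

/-- Membership in `Unbhd` is equivalent to agreement of codes on `seqBelow n`. -/
lemma mem_Unbhd_iff_codeF {n : ℕ} {T T' : ↥(Atree α)} :
    T' ∈ Unbhd α n T ↔ ∀ ν ∈ seqBelow n, codeF T' ν = codeF T ν := by
  constructor
  · rintro ⟨hset, hrank⟩ ν hν
    by_cases hmem : ν ∈ T.1
    · have hmem' : ν ∈ T'.1 := by
        have : ν ∈ T.1 ∩ seqBelow n := ⟨hmem, hν⟩
        rw [← hset] at this
        exact this.1
      rw [codeF_pos hmem, codeF_eq_some_iff]
      exact ⟨hmem', hrank ν ⟨hmem, hν⟩⟩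
    · have hmem' : ν ∉ T'.1 := by
        intro hc
        have : ν ∈ T'.1 ∩ seqBelow n := ⟨hc, hν⟩
        rw [hset] at this
        exact hmem this.1
      rw [codeF_neg hmem, codeF_neg hmem']
  · intro h
    have hset : T'.1 ∩ seqBelow n = T.1 ∩ seqBelow n := by
      ext ν
      constructor
      · rintro ⟨h1, h2⟩
        refine ⟨?_, h2⟩
        rw [← codeF_ne_none_iff (T := T), ← h ν h2, codeF_ne_none_iff]
        exact h1
      · rintro ⟨h1, h2⟩
        refine ⟨?_, h2⟩
        rw [← codeF_ne_none_iff (T := T'), h ν h2, codeF_ne_none_iff]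
        exact h1
    refine ⟨hset, ?_⟩
    rintro ν ⟨h1, h2⟩
    have hthis := h ν h2
    rw [codeF_pos h1, codeF_eq_some_iff] at hthis
    exact hthis.2

lemma Unbhd_mono {n n' : ℕ} (h : n ≤ n') (T : ↥(Atree α)) :
    Unbhd α n' T ⊆ Unbhd α n T := by
  intro T' hT'
  rw [mem_Unbhd_iff_codeF] at hT' ⊢
  exact fun ν hν => hT' ν (seqBelow_mono h hν)

/-- openness criterion for the topology `tauTop` -/
lemma tau_isOpen {S : Set ↥(Atree α)} (h : ∀ T ∈ S, ∃ n, Unbhd α n T ⊆ S) :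
    @IsOpen _ (tauTop α) S := by
  have : S = ⋃₀ {u | (∃ (n : ℕ) (T : ↥(Atree α)), u = Unbhd α n T) ∧ u ⊆ S} := by
    apply Set.Subset.antisymm
    · intro T hT
      obtain ⟨n, hn⟩ := h T hT
      exact ⟨Unbhd α n T, ⟨⟨n, T, rfl⟩, hn⟩, mem_Unbhd_self n T⟩
    · rintro T ⟨u, ⟨-, hu⟩, hTu⟩
      exact hu hTu
  rw [this]
  apply TopologicalSpace.GenerateOpen.sUnion
  rintro u ⟨⟨n, T, rfl⟩, -⟩
  exact TopologicalSpace.GenerateOpen.basic _ ⟨n, T, rfl⟩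

end Coding


section Witness

variable {α : Ordinal}

/-- witness predicate at the level of codes -/
def PwC (enc : Option ↥(Set.Iic α) → ℕ) (c0 c1 : Option ↥(Set.Iic α)) (b : ℕ) : Prop :=
  ∃ (β γ δ : ↥(Set.Iic α)), enc (some β) = b ∧ c0 = some γ ∧ (β : Ordinal) < γ ∧
    c1 = some δ ∧ (β : Ordinal) ≤ δ

/-- domain predicate at the level of codes -/
def QwC (enc : Option ↥(Set.Iic α) → ℕ) (c0 : Option ↥(Set.Iic α)) (b : ℕ) : Prop :=
  ∃ (β γ : ↥(Set.Iic α)), enc (some β) = b ∧ c0 = some γ ∧ (β : Ordinal) < γ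

def Pw (enc : Option ↥(Set.Iic α) → ℕ) (T : ↥(Atree α)) (s : List ℕ) (b m : ℕ) : Prop :=
  PwC enc (codeF T s) (codeF T (s ++ [m])) b

lemma exists_Pw_iff_Qw (enc : Option ↥(Set.Iic α) → ℕ) (T : ↥(Atree α)) (s : List ℕ) (b : ℕ) :
    (∃ m, Pw enc T s b m) ↔ QwC enc (codeF T s) b := by
  constructor
  · rintro ⟨m, β, γ, δ, h1, h2, h3, -⟩
    exact ⟨β, γ, h1, h2, h3⟩
  · rintro ⟨β, γ, h1, h2, h3⟩
    obtain ⟨hs, hrank⟩ := codeF_eq_some_iff.mp h2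
    have hβ : (β : Ordinal) < treeRank T.1 s := hrank ▸ h3
    obtain ⟨c, hc, hβc⟩ := exists_witness (childRel_wf_mem T) hβ
    obtain ⟨m, rfl⟩ := hc.2
    exact ⟨m, β, γ, ⟨treeRank T.1 _, rank_le_alpha T hc.1⟩, h1, h2, h3,
      codeF_pos hc.1, hβc⟩

open Classical in
noncomputable def Wf (enc : Option ↥(Set.Iic α) → ℕ) (T : ↥(Atree α)) (s : List ℕ) (b : ℕ) : ℕ :=
  if h : ∃ m, Pw enc T s b m then Nat.find h + 1 else 0

lemma Wf_locally_constant (enc : Option ↥(Set.Iic α) → ℕ) (T : ↥(Atree α)) (s : List ℕ)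
    (b : ℕ) : ∃ n, ∀ T' ∈ Unbhd α n T, Wf enc T' s b = Wf enc T s b := by
  classical
  unfold Wf
  by_cases h : ∃ m, Pw enc T s b m
  · refine ⟨s.length + s.sum + Nat.find h + 2, fun T' hT' => ?_⟩
    have hag : ∀ j, j ≤ Nat.find h → codeF T' (s ++ [j]) = codeF T (s ++ [j]) :=
      fun j hj => mem_Unbhd_iff_codeF.mp hT' _ (mem_seqBelow s j (Nat.find h) hj)
    have hs : codeF T' s = codeF T s :=
      mem_Unbhd_iff_codeF.mp hT' s (mem_seqBelow' s (Nat.find h))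
    have hP : ∀ j, j ≤ Nat.find h → (Pw enc T' s b j ↔ Pw enc T s b j) := by
      intro j hj
      unfold Pw
      rw [hag j hj, hs]
    have h' : ∃ m, Pw enc T' s b m := ⟨Nat.find h, (hP _ le_rfl).mpr (Nat.find_spec h)⟩
    rw [dif_pos h', dif_pos h]
    congr 1
    rw [Nat.find_eq_iff]
    exact ⟨(hP _ le_rfl).mpr (Nat.find_spec h),
      fun j hj hc => Nat.find_min h hj ((hP j (le_of_lt hj)).mp hc)⟩
  · refine ⟨s.length + s.sum + 2, fun T' hT' => ?_⟩
    have hs : codeF T' s = codeF T s :=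
      mem_Unbhd_iff_codeF.mp hT' s (mem_seqBelow' s 0)
    have h'' : ¬ ∃ m, Pw enc T' s b m := by
      rw [exists_Pw_iff_Qw, hs, ← exists_Pw_iff_Qw]
      exact h
    rw [dif_neg h'', dif_neg h]

/-- The coding map into the ambient Polish space. -/
noncomputable def Phi (enc : Option ↥(Set.Iic α) → ℕ) (T : ↥(Atree α)) :
    (List ℕ → ℕ) × (List ℕ × ℕ → ℕ) :=
  (fun ν => enc (codeF T ν), fun p => Wf enc T p.1 p.2)

lemma Phi_injective {enc : Option ↥(Set.Iic α) → ℕ} (henc : Function.Injective enc) :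
    Function.Injective (Phi (α := α) enc) := by
  intro T T' h
  have h1 : ∀ ν, codeF T ν = codeF T' ν := fun ν => henc (congrFun (congrArg Prod.fst h) ν)
  apply Subtype.ext
  ext ν
  rw [← codeF_ne_none_iff (T := T), h1 ν, codeF_ne_none_iff]

end Witness


section ClosedSet

variable {α : Ordinal}

/-- The target set of the coding map: a closed subset of the ambient Polish space. -/
def Cset (enc : Option ↥(Set.Iic α) → ℕ) : Set ((List ℕ → ℕ) × (List ℕ × ℕ → ℕ)) :=
  {x | x.1 [] = enc (some ⟨α, Set.self_mem_Iic⟩) ∧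
    (∀ s : List ℕ, x.1 s ∈ Set.range enc) ∧
    (∀ (s : List ℕ) (m : ℕ), x.1 (s ++ [m]) ≠ enc none → x.1 s ≠ enc none) ∧
    (∀ (s : List ℕ) (m : ℕ) (β γ : ↥(Set.Iic α)),
      x.1 (s ++ [m]) = enc (some β) → x.1 s = enc (some γ) → (β : Ordinal) < γ) ∧
    (∀ (s : List ℕ) (β γ : ↥(Set.Iic α)),
      x.1 s = enc (some γ) → (β : Ordinal) < γ → x.2 (s, enc (some β)) ≠ 0) ∧
    (∀ (s : List ℕ) (b : ℕ) (β : ↥(Set.Iic α)) (m : ℕ),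
      b = enc (some β) → x.2 (s, b) = m + 1 →
        ∃ δ : ↥(Set.Iic α), x.1 (s ++ [m]) = enc (some δ) ∧ (β : Ordinal) ≤ δ) ∧
    (∀ (s : List ℕ) (b : ℕ), x.2 (s, b) ≠ 0 →
      ∃ (β γ : ↥(Set.Iic α)), b = enc (some β) ∧ x.1 s = enc (some γ) ∧ (β : Ordinal) < γ) ∧
    (∀ (s : List ℕ) (b : ℕ) (β : ↥(Set.Iic α)) (m j : ℕ) (δ : ↥(Set.Iic α)),
      b = enc (some β) → x.2 (s, b) = m + 1 → j < m →
        x.1 (s ++ [j]) = enc (some δ) → (δ : Ordinal) < β)}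

lemma isClosed_coord2 {X : Type*} [TopologicalSpace X] (u v : X → ℕ) (hu : Continuous u)
    (hv : Continuous v) (A : Set (ℕ × ℕ)) : IsClosed {x | (u x, v x) ∈ A} :=
  (isClosed_discrete A).preimage (hu.prodMk hv)

set_option maxHeartbeats 1000000 in
lemma isClosed_Cset (enc : Option ↥(Set.Iic α) → ℕ) : IsClosed (Cset enc) := by
  have hc1 : ∀ s : List ℕ,
      Continuous (fun x : (List ℕ → ℕ) × (List ℕ × ℕ → ℕ) => x.1 s) :=
    fun s => (continuous_apply s).comp continuous_fst
  have hc2 : ∀ p : List ℕ × ℕ,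
      Continuous (fun x : (List ℕ → ℕ) × (List ℕ × ℕ → ℕ) => x.2 p) :=
    fun p => (continuous_apply p).comp continuous_snd
  unfold Cset
  simp only [Set.setOf_and, Set.setOf_forall]
  refine (isClosed_coord2 _ _ (hc1 []) (hc1 [])
      {p | p.1 = enc (some ⟨α, Set.self_mem_Iic⟩)}).inter
    ((isClosed_iInter fun s =>
        isClosed_coord2 _ _ (hc1 s) (hc1 s) {p | p.1 ∈ Set.range enc}).inter
    ((isClosed_iInter fun s => isClosed_iInter fun m =>
        isClosed_coord2 _ _ (hc1 (s ++ [m])) (hc1 s)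
          {p | p.1 ≠ enc none → p.2 ≠ enc none}).inter
    ((isClosed_iInter fun s => isClosed_iInter fun m => isClosed_iInter fun β =>
        isClosed_iInter fun γ => isClosed_coord2 _ _ (hc1 (s ++ [m])) (hc1 s)
          {p | p.1 = enc (some β) → p.2 = enc (some γ) → (β : Ordinal) < γ}).inter
    ((isClosed_iInter fun s => isClosed_iInter fun β => isClosed_iInter fun γ =>
        isClosed_coord2 _ _ (hc1 s) (hc2 (s, enc (some β)))
          {p | p.1 = enc (some γ) → (β : Ordinal) < γ → p.2 ≠ 0}).inter
    ((isClosed_iInter fun s => isClosed_iInter fun b =>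
        isClosed_iInter fun (β : ↥(Set.Iic α)) =>
        isClosed_iInter fun m => isClosed_iInter fun _ =>
        isClosed_coord2 _ _ (hc2 (s, b)) (hc1 (s ++ [m]))
          {p | p.1 = m + 1 →
            ∃ δ : ↥(Set.Iic α), p.2 = enc (some δ) ∧ (β : Ordinal) ≤ δ}).inter
    ((isClosed_iInter fun s => isClosed_iInter fun b =>
        isClosed_coord2 _ _ (hc2 (s, b)) (hc1 s)
          {p | p.1 ≠ 0 → ∃ (β γ : ↥(Set.Iic α)),
            b = enc (some β) ∧ p.2 = enc (some γ) ∧ (β : Ordinal) < γ}).inter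
    (isClosed_iInter fun s => isClosed_iInter fun b =>
        isClosed_iInter fun (β : ↥(Set.Iic α)) =>
        isClosed_iInter fun m => isClosed_iInter fun j =>
        isClosed_iInter fun (δ : ↥(Set.Iic α)) =>
        isClosed_iInter fun _ =>
        isClosed_coord2 _ _ (hc2 (s, b)) (hc1 (s ++ [j]))
          {p | p.1 = m + 1 → j < m → p.2 = enc (some δ) → (δ : Ordinal) < β})))))))

end ClosedSet


section RangeChar

variable {α : Ordinal} {enc : Option ↥(Set.Iic α) → ℕ}

lemma Phi_mem_Cset (henc : Function.Injective enc) (T : ↥(Atree α)) :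
    Phi enc T ∈ Cset enc := by
  classical
  have hwf := childRel_wf_mem T
  refine ⟨?_, fun s => ⟨codeF T s, rfl⟩, ?_, ?_, ?_, ?_, ?_, ?_⟩
  · show enc (codeF T []) = _
    congr 1
    rw [codeF_eq_some_iff]
    exact ⟨T.2.2.1, T.2.2.2⟩
  · intro s m h1 h2
    have hm : s ++ [m] ∈ T.1 := codeF_ne_none_iff.mp fun hc => h1 (congrArg enc hc)
    have hs : s ∈ T.1 := T.2.1.1 _ hm s (List.prefix_append _ _)
    exact codeF_ne_none_iff.mpr hs (henc h2)
  · intro s m β γ h1 h2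
    obtain ⟨hm, hrm⟩ := codeF_eq_some_iff.mp (henc h1)
    obtain ⟨hs, hrs⟩ := codeF_eq_some_iff.mp (henc h2)
    rw [← hrm, ← hrs]
    exact treeRank_lt hwf ⟨hm, m, rfl⟩
  · intro s β γ h1 h2
    have hq : ∃ m, Pw enc T s (enc (some β)) m :=
      (exists_Pw_iff_Qw enc T s _).mpr ⟨β, γ, rfl, henc h1, h2⟩
    show Wf enc T s (enc (some β)) ≠ 0
    unfold Wf
    rw [dif_pos hq]
    exact Nat.succ_ne_zero _
  · intro s b β m h1 h2
    replace h2 : Wf enc T s b = m + 1 := h2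
    by_cases hq : ∃ m', Pw enc T s b m'
    · unfold Wf at h2
      rw [dif_pos hq] at h2
      have hm : Nat.find hq = m := Nat.succ_injective h2
      have hp := Nat.find_spec hq
      rw [hm] at hp
      obtain ⟨β', γ', δ', hb', hc0, hlt, hc1, hle⟩ := hp
      have hββ : β' = β := Option.some_injective _ (henc (by rw [hb', h1]))
      exact ⟨δ', congrArg enc hc1, hββ ▸ hle⟩
    · unfold Wf at h2
      rw [dif_neg hq] at h2
      exact absurd h2.symm (Nat.succ_ne_zero m)
  · intro s b h
    replace h : Wf enc T s b ≠ 0 := h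
    by_cases hq : ∃ m, Pw enc T s b m
    · obtain ⟨β, γ, hb, hc0, hlt⟩ := (exists_Pw_iff_Qw enc T s b).mp hq
      exact ⟨β, γ, hb.symm, congrArg enc hc0, hlt⟩
    · unfold Wf at h
      rw [dif_neg hq] at h
      exact absurd rfl h
  · intro s b β m j δ h1 h2 h3 h4
    replace h2 : Wf enc T s b = m + 1 := h2
    by_cases hq : ∃ m', Pw enc T s b m'
    · unfold Wf at h2
      rw [dif_pos hq] at h2
      have hm : Nat.find hq = m := Nat.succ_injective h2
      obtain ⟨β', γ', hb', hc0, hlt⟩ := (exists_Pw_iff_Qw enc T s b).mp hq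
      have hββ : β' = β := Option.some_injective _ (henc (by rw [hb', h1]))
      subst hββ
      by_contra hcon
      have hPj : Pw enc T s b j :=
        ⟨β', γ', δ, hb', hc0, hlt, henc h4, not_lt.mp hcon⟩
      exact Nat.find_min hq (hm ▸ h3) hPj
    · unfold Wf at h2
      rw [dif_neg hq] at h2
      exact absurd h2.symm (Nat.succ_ne_zero m)

lemma Cset_subset_range (henc : Function.Injective enc) :
    Cset enc ⊆ Set.range (Phi enc) := by
  classical
  rintro ⟨f, w⟩ ⟨hC1, hC0, hC2, hC3, hC5, hC6, hC7, hC8⟩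
  simp only at hC1 hC2 hC3 hC5 hC6 hC7 hC8
  choose F hF using hC0
  have hF' : ∀ s, enc (F s) = f s := hF
  have hfe : ∀ (s : List ℕ) (o : Option ↥(Set.Iic α)), f s = enc o ↔ F s = o := by
    intro s o
    rw [← hF' s]
    exact ⟨fun h => henc h, fun h => congrArg enc h⟩
  have h2 : ∀ s m, F (s ++ [m]) ≠ none → F s ≠ none := by
    intro s m hne hc
    refine hC2 s m (fun hc' => hne ((hfe _ _).mp hc')) ((hfe s none).mpr hc)
  have h3 : ∀ s m β γ, F (s ++ [m]) = some β → F s = some γ → (β : Ordinal) < γ :=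
    fun s m β γ hm hs => hC3 s m β γ ((hfe _ _).mpr hm) ((hfe s _).mpr hs)
  have h4 : ∀ s γ, F s = some γ → ∀ β : Ordinal, β < γ →
      ∃ m δ, F (s ++ [m]) = some δ ∧ β ≤ (δ : Ordinal) := by
    intro s γ hs β hβ
    have hβα : β ∈ Set.Iic α := le_trans hβ.le γ.2
    have h5' := hC5 s ⟨β, hβα⟩ γ ((hfe s _).mpr hs) hβ
    obtain ⟨m, hm⟩ : ∃ m, w (s, enc (some ⟨β, hβα⟩)) = m + 1 := by
      cases h : w (s, enc (some ⟨β, hβα⟩)) with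
      | zero => exact absurd h h5'
      | succ k => exact ⟨k, rfl⟩
    obtain ⟨δ, hδ, hle⟩ := hC6 s _ ⟨β, hβα⟩ m rfl hm
    exact ⟨m, δ, (hfe _ _).mp hδ, hle⟩
  obtain ⟨htree, hwf, hnb, hrank⟩ := master h2 h3 h4
  have hroot : F [] = some ⟨α, Set.self_mem_Iic⟩ := (hfe _ _).mp hC1
  have hmem : {ν | F ν ≠ none} ∈ Atree α := by
    refine ⟨⟨htree, hnb⟩, ?_, ?_⟩
    · show F [] ≠ none
      rw [hroot]
      exact Option.some_ne_none _
    · rw [hrank]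
      simp [vOf, hroot]
  refine ⟨⟨{ν | F ν ≠ none}, hmem⟩, ?_⟩
  set T : ↥(Atree α) := ⟨{ν | F ν ≠ none}, hmem⟩ with hT
  have hcode : ∀ ν, codeF T ν = F ν := by
    intro ν
    by_cases h : F ν = none
    · rw [codeF_neg (show ν ∉ T.1 from fun hc => hc h), h]
    · obtain ⟨γ, hγ⟩ := Option.ne_none_iff_exists'.mp h
      rw [hγ, codeF_eq_some_iff]
      refine ⟨h, ?_⟩
      rw [hrank]
      simp [vOf, hγ]
  have hPhi1 : (fun ν => enc (codeF T ν)) = f := by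
    funext ν
    rw [hcode, hF']
  refine Prod.ext hPhi1 ?_
  show (fun p : List ℕ × ℕ => Wf enc T p.1 p.2) = w
  funext p
  obtain ⟨s, b⟩ := p
  show Wf enc T s b = w (s, b)
  by_cases hq : ∃ m, Pw enc T s b m
  · obtain ⟨β, γ, hb, hc0, hβγ⟩ := (exists_Pw_iff_Qw enc T s b).mp hq
    rw [hcode] at hc0
    obtain ⟨m, hm⟩ : ∃ m, w (s, b) = m + 1 := by
      have h5' := hC5 s β γ ((hfe s _).mpr hc0) hβγ
      rw [hb] at h5'
      cases h : w (s, b) with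
      | zero => exact absurd h h5'
      | succ k => exact ⟨k, rfl⟩
    unfold Wf
    rw [dif_pos hq, hm]
    congr 1
    rw [Nat.find_eq_iff]
    constructor
    · obtain ⟨δ, hδ, hle⟩ := hC6 s b β m hb.symm hm
      exact ⟨β, γ, δ, hb, (hcode s).symm ▸ hc0, hβγ, (hcode _).symm ▸ (hfe _ _).mp hδ, hle⟩
    · rintro j hj ⟨β', γ', δ', hb', hc0', hlt', hc1', hle'⟩
      have hββ : β' = β := Option.some_injective _ (henc (by rw [hb', hb]))
      have hδ' : f (s ++ [j]) = enc (some δ') := (hfe _ _).mpr ((hcode _) ▸ hc1')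
      have := hC8 s b β m j δ' hb.symm hm hj hδ'
      rw [hββ] at hle'
      exact absurd this (not_lt.mpr hle')
  · unfold Wf
    rw [dif_neg hq]
    by_contra hw
    obtain ⟨m, hm⟩ : ∃ m, w (s, b) = m + 1 := by
      cases h : w (s, b) with
      | zero => exact absurd h (Ne.symm hw)
      | succ k => exact ⟨k, rfl⟩
    obtain ⟨β, γ, hb, hc0, hlt⟩ := hC7 s b (by rw [hm]; exact Nat.succ_ne_zero m)
    exact hq ((exists_Pw_iff_Qw enc T s b).mpr
      ⟨β, γ, hb.symm, (hcode s).symm ▸ (hfe s _).mp hc0, hlt⟩)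

end RangeChar


section Final

variable {α : Ordinal}

lemma Unbhd_trans {n : ℕ} {T T' : ↥(Atree α)} (h : T' ∈ Unbhd α n T) :
    Unbhd α n T' ⊆ Unbhd α n T := by
  intro T'' hT''
  rw [mem_Unbhd_iff_codeF] at h hT'' ⊢
  exact fun ν hν => (hT'' ν hν).trans (h ν hν)

lemma isOpen_Unbhd (n : ℕ) (T : ↥(Atree α)) : @IsOpen _ (tauTop α) (Unbhd α n T) :=
  tau_isOpen fun T' hT' => ⟨n, Unbhd_trans hT'⟩

lemma countable_Iic (hα : α.card ≤ Cardinal.aleph0) : Countable ↥(Set.Iic α) := by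
  rw [← Cardinal.mk_le_aleph0_iff]
  have he : Set.Iic α = Set.Iio (α + 1) := by
    ext β
    simp only [Set.mem_Iic, Set.mem_Iio]
    rw [← Order.succ_le_iff, Ordinal.add_one_eq_succ, Order.succ_le_succ_iff]
  rw [he, Ordinal.mk_Iio_ordinal]
  have hcard : (α + 1).card ≤ Cardinal.aleph0 := by
    rw [Ordinal.add_one_eq_succ, Ordinal.card_succ]
    calc α.card + 1 ≤ Cardinal.aleph0 + 1 := add_le_add_left hα 1
      _ = Cardinal.aleph0 := Cardinal.add_one_of_aleph0_le le_rfl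
  exact le_trans (Cardinal.lift_le.mpr hcard) Cardinal.lift_aleph0.le

lemma continuous_Phi (enc : Option ↥(Set.Iic α) → ℕ) :
    @Continuous _ _ (tauTop α) _ (Phi enc) := by
  letI : TopologicalSpace ↥(Atree α) := tauTop α
  apply Continuous.prodMk
  · apply continuous_pi
    intro ν
    rw [continuous_discrete_rng]
    intro b
    apply tau_isOpen
    intro T' hT'
    refine ⟨ν.length + ν.sum + 2, fun T'' hT'' => ?_⟩
    have := mem_Unbhd_iff_codeF.mp hT'' ν (mem_seqBelow' ν 0)
    show enc (codeF T'' ν) ∈ ({b} : Set ℕ)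
    rw [this]
    exact hT'
  · apply continuous_pi
    intro p
    rw [continuous_discrete_rng]
    intro b
    apply tau_isOpen
    intro T' hT'
    obtain ⟨n, hn⟩ := Wf_locally_constant enc T' p.1 p.2
    refine ⟨n, fun T'' hT'' => ?_⟩
    show Wf enc T'' p.1 p.2 ∈ ({b} : Set ℕ)
    rw [hn T'' hT'']
    exact hT'

lemma isClosedEmbedding_Phi {enc : Option ↥(Set.Iic α) → ℕ}
    (henc : Function.Injective enc) :
    @Topology.IsClosedEmbedding _ _ (tauTop α) _ (Phi enc) := by
  letI : TopologicalSpace ↥(Atree α) := tauTop α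
  have hrange : Set.range (Phi enc) = Cset enc := by
    apply Set.Subset.antisymm
    · rintro _ ⟨T, rfl⟩
      exact Phi_mem_Cset henc T
    · exact Cset_subset_range henc
  refine ⟨⟨⟨?_⟩, Phi_injective henc⟩, by rw [hrange]; exact isClosed_Cset enc⟩
  apply le_antisymm
  · exact continuous_iff_le_induced.mp (continuous_Phi enc)
  · apply le_generateFrom
    rintro _ ⟨n, T, rfl⟩
    rw [isOpen_induced_iff]
    refine ⟨⋂ ν ∈ seqBelow n, {x : (List ℕ → ℕ) × (List ℕ × ℕ → ℕ) |
      x.1 ν = enc (codeF T ν)}, ?_, ?_⟩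
    · apply (seqBelow_finite n).isOpen_biInter
      intro ν _
      have hc1 : Continuous (fun x : (List ℕ → ℕ) × (List ℕ × ℕ → ℕ) => x.1 ν) :=
        (continuous_apply ν).comp continuous_fst
      exact (isOpen_discrete {enc (codeF T ν)}).preimage hc1
    · ext T'
      simp only [Set.mem_preimage, Set.mem_iInter, Set.mem_setOf_eq]
      rw [mem_Unbhd_iff_codeF]
      constructor
      · intro h ν hν
        exact henc (h ν hν)
      · intro h ν hν
        show enc (codeF T' ν) = enc (codeF T ν)
        rw [h ν hν]

end Final

/-- For every countable ordinal `α`, `⟨A_α, τ_α⟩` is a Baire space; in fact every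
basic τ_α-open set `U(n,T)` (which is nonempty, containing `T`) is not τ_α-meager. -/
theorem stmt7 (α : Ordinal) (hα : α.card ≤ Cardinal.aleph0) :
    @BaireSpace ↥(Atree α) (tauTop α) ∧
    ∀ (n : ℕ) (T : ↥(Atree α)),
      (Unbhd α n T).Nonempty ∧ ¬ @IsMeagre ↥(Atree α) (tauTop α) (Unbhd α n T) := by
  letI : TopologicalSpace ↥(Atree α) := tauTop α
  haveI : Countable ↥(Set.Iic α) := countable_Iic hα
  obtain ⟨enc, henc⟩ := (inferInstance : Countable (Option ↥(Set.Iic α))).exists_injective_nat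
  haveI : PolishSpace ↥(Atree α) := (isClosedEmbedding_Phi henc).polishSpace
  letI := TopologicalSpace.upgradeIsCompletelyMetrizable ↥(Atree α)
  haveI : BaireSpace ↥(Atree α) := inferInstance
  refine ⟨inferInstance, fun n T => ⟨⟨T, mem_Unbhd_self n T⟩, ?_⟩⟩
  intro hM
  have hdense : Dense (Unbhd α n T)ᶜ := dense_of_mem_residual hM
  obtain ⟨x, hx1, hx2⟩ := hdense.inter_open_nonempty (Unbhd α n T) (isOpen_Unbhd n T)
    ⟨T, mem_Unbhd_self n T⟩
  exact hx2 hx1
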